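/- The q-Chebyshev polynomials of the second kind, defined by U_0 = 1, U_1 = (1+q)x, and U_n(x,s,q) = (1+q^n)·x·U_{n-1}(x,s,q) + q^{n-1}·s·U_{n-2}(x,s,q), satisfy the explicit formula U_n(x,s,q) = ∑_{k=0}^{⌊n/2⌋} q^{k²}·[n-k choose k]_q · (∏_{j=k+1}^{n-k}(1+q^j)) · s^k·x^{n-2k}. -/

import Mathlib

open Finset

noncomputable section

/-- The polynomial ring `ℤ[q,x,s]`. -/
abbrev R : Type := MvPolynomial (Fin 3) ℤ

def q : R := MvPolynomial.X 0
def x : R := MvPolynomial.X 1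
def s : R := MvPolynomial.X 2

/-- The Gaussian binomial coefficient `[n choose k]_q` as a polynomial in `q`,
via the Pascal recursion `[n+1, k+1] = [n, k+1] + q^(n-k) [n, k]`. -/
def gbinom : ℕ → ℕ → R
  | _, 0 => 1
  | 0, _ + 1 => 0
  | (n + 1), (k + 1) => gbinom n (k + 1) + q ^ (n - k) * gbinom n k

/-- q-Chebyshev polynomials of the second kind:
`U 0 = 1`, `U 1 = (1+q)x`, `U n = (1+q^n) x U (n-1) + q^(n-1) s U (n-2)`. -/
def chebU : ℕ → R
  | 0 => 1
  | 1 => (1 + q) * x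
  | (n + 2) => (1 + q ^ (n + 2)) * x * chebU (n + 1) + q ^ (n + 1) * s * chebU n

lemma gbinom_zero (n : ℕ) : gbinom n 0 = 1 := by cases n <;> rfl
lemma gbinom_succ (n k : ℕ) : gbinom (n+1) (k+1) = gbinom n (k+1) + q ^ (n-k) * gbinom n k := rfl

lemma gbinom_eq_zero : ∀ {n k : ℕ}, n < k → gbinom n k = 0
  | 0, _+1, _ => rfl
  | n+1, k+1, h => by
      rw [gbinom_succ, gbinom_eq_zero (show n < k+1 by omega),
        gbinom_eq_zero (show n < k by omega)]
      ring

lemma gbinom_self : ∀ n, gbinom n n = 1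
  | 0 => rfl
  | n+1 => by
      rw [gbinom_succ, gbinom_eq_zero (show n < n+1 by omega), gbinom_self n,
        Nat.sub_self]; ring

lemma pascal2 : ∀ n k, gbinom (n+1) (k+1) = q^(k+1) * gbinom n (k+1) + gbinom n k
  | 0, 0 => by
      simp [gbinom_succ, gbinom_zero, gbinom_eq_zero (show (0:ℕ) < 1 by omega)]
  | 0, k+1 => by
      simp [gbinom_succ, gbinom_eq_zero (show (0:ℕ) < k+1 by omega),
        gbinom_eq_zero (show (0:ℕ) < k+2 by omega)]
  | n+1, 0 => by
      have h1 := gbinom_succ (n+1) 0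
      have h2 := pascal2 n 0
      have h3 := gbinom_succ n 0
      simp only [Nat.sub_zero, gbinom_zero] at h1 h2 h3 ⊢
      linear_combination h1 + h2 - q * h3
  | n+1, k+1 => by
      by_cases hkn : k + 1 ≤ n
      · obtain ⟨d, rfl⟩ : ∃ d, n = k+1+d := ⟨n-(k+1), by omega⟩
        have h1 := gbinom_succ (k+1+d+1) (k+1)
        have h2 := pascal2 (k+1+d) (k+1)
        have h3 := pascal2 (k+1+d) k
        have h4 := gbinom_succ (k+1+d) (k+1)
        have h5 := gbinom_succ (k+1+d) k
        rw [show k+1+d+1-(k+1) = d+1 from by omega] at h1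
        rw [show k+1+d-(k+1) = d from by omega] at h4
        rw [show k+1+d-k = d+1 from by omega] at h5
        linear_combination h1 + h2 + q^(d+1) * h3 - q^(k+1+1) * h4 - h5
      · rcases Nat.eq_or_lt_of_le (by omega : n ≤ k) with rfl | hlt
        · rw [gbinom_self, gbinom_eq_zero (show n+1 < n+1+1 by omega), gbinom_self]
          ring
        · rw [gbinom_eq_zero (show n+1+1 < k+1+1 by omega),
            gbinom_eq_zero (show n+1 < k+1+1 by omega),
            gbinom_eq_zero (show n+1 < k+1 by omega)]
          ring

lemma key (a d : ℕ) :
    (1 + q^(a+d+2)) * gbinom (a+d+2) (a+1)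
      = (1 + q^(2*a+d+3)) * gbinom (a+d+1) (a+1)
        + q^(d+1) * (1 + q^(a+1)) * gbinom (a+d+1) a := by
  have h1 := gbinom_succ (a+d+1) a
  have h2 := pascal2 (a+d+1) a
  rw [show a+d+1-a = d+1 from by omega] at h1
  simp only [show a+d+1+1 = a+d+2 from rfl] at h1 h2
  linear_combination h1 + q^(a+d+2) * h1 + q^(a+d+2) * h2 - q^(a+d+2) * h1

def F (n k : ℕ) : R :=
  q^(k^2) * gbinom (n-k) k * (∏ j ∈ Icc (k+1) (n-k), (1+q^j)) * s^k * x^(n-2*k)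

lemma F_eq_zero {n k : ℕ} (h : n < 2*k) : F n k = 0 := by
  rw [F, gbinom_eq_zero (show n-k < k from by omega)]; ring

lemma Icc_bot_step (k m : ℕ) (h : k+1 ≤ m) :
    ∏ j ∈ Icc (k+1) m, (1+q^j) = (1+q^(k+1)) * ∏ j ∈ Icc (k+2) m, (1+q^j) := by
  have hins : Icc (k+1) m = insert (k+1) (Icc (k+2) m) := by
    ext j; simp only [mem_Icc, mem_insert]; omega
  rw [hins, Finset.prod_insert (by simp only [mem_Icc]; omega)]

lemma F_step (k a : ℕ) :
    F (2*k+a+3) (k+1)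
      = (1+q^(2*k+a+3)) * x * F (2*k+a+2) (k+1) + q^(2*k+a+2) * s * F (2*k+a+1) k := by
  simp only [F]
  rw [show 2*k+a+3-(k+1) = k+a+2 from by omega, show 2*k+a+3-2*(k+1) = a+1 from by omega,
      show 2*k+a+2-(k+1) = k+a+1 from by omega, show 2*k+a+2-2*(k+1) = a from by omega,
      show 2*k+a+1-k = k+a+1 from by omega, show 2*k+a+1-2*k = a+1 from by omega]
  have hP1 := Finset.prod_Icc_succ_top (show k+2 ≤ k+a+1+1 from by omega)
      (fun j => (1:R)+q^j)
  simp only [show k+a+1+1 = k+a+2 from rfl] at hP1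
  rw [hP1, Icc_bot_step k (k+a+1) (by omega)]
  linear_combination (q^((k+1)^2) * (∏ j ∈ Icc (k+2) (k+a+1), (1+q^j)) * s^(k+1) * x^(a+1)) * key k a

lemma F_step_top (k : ℕ) :
    F (2*k+2) (k+1) = (1+q^(2*k+2)) * x * F (2*k+1) (k+1) + q^(2*k+1) * s * F (2*k) k := by
  simp only [F]
  rw [show 2*k+2-(k+1) = k+1 from by omega, show 2*k+2-2*(k+1) = 0 from by omega,
      show 2*k+1-(k+1) = k from by omega, show 2*k+1-2*(k+1) = 0 from by omega,
      show 2*k-k = k from by omega, show 2*k-2*k = 0 from by omega]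
  rw [gbinom_eq_zero (show k < k+1 from by omega), gbinom_self (k+1), gbinom_self k]
  rw [show Icc (k+2) (k+1) = (∅ : Finset ℕ) from Finset.Icc_eq_empty (by omega),
      show Icc (k+1) k = (∅ : Finset ℕ) from Finset.Icc_eq_empty (by omega)]
  simp only [Finset.prod_empty]
  ring

lemma F_zero_step (n : ℕ) : F (n+2) 0 = (1+q^(n+2)) * x * F (n+1) 0 := by
  simp only [F]
  rw [show n+2-0 = n+2 from by omega, show n+1-0 = n+1 from by omega]
  have hP := Finset.prod_Icc_succ_top (show 0+1 ≤ n+1+1 from by omega) (fun j => (1:R)+q^j)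
  simp only [show n+1+1 = n+2 from rfl, show (0:ℕ)+1 = 1 from rfl] at hP
  rw [hP]
  simp only [gbinom_zero]
  ring

lemma chebU_succ_succ (n : ℕ) :
    chebU (n+2) = (1 + q ^ (n + 2)) * x * chebU (n + 1) + q ^ (n + 1) * s * chebU n := rfl

lemma chebU_eq : ∀ m, chebU m = ∑ k ∈ range (m/2+1), F m k
  | 0 => by
    rw [show (0:ℕ)/2+1 = 1 from rfl, Finset.sum_range_one]
    rw [show F 0 0 = q^(0^2) * gbinom 0 0 * (∏ j ∈ Icc 1 0, (1+q^j)) * s^0 * x^0 from rfl]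
    rw [show Icc 1 0 = (∅ : Finset ℕ) from Finset.Icc_eq_empty (by omega)]
    simp [chebU, gbinom_zero]
  | 1 => by
    rw [show (1:ℕ)/2+1 = 1 from rfl, Finset.sum_range_one]
    rw [show F 1 0 = q^(0^2) * gbinom 1 0 * (∏ j ∈ Icc 1 1, (1+q^j)) * s^0 * x^1 from rfl]
    rw [Finset.Icc_self, gbinom_zero]
    simp [chebU]
  | (n+2) => by
    rw [chebU_succ_succ, chebU_eq (n+1), chebU_eq n]
    have hA : ∑ k ∈ range ((n+1)/2+1), F (n+1) k = ∑ k ∈ range (n/2+2), F (n+1) k := by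
      apply Finset.sum_subset
      · intro k hk
        simp only [mem_range] at hk ⊢
        omega
      · intro k _ hk
        simp only [mem_range] at hk
        exact F_eq_zero (by omega)
    rw [hA, show (n+2)/2+1 = n/2+2 from by omega]
    rw [show n/2+2 = n/2+1+1 from rfl,
        Finset.sum_range_succ' (fun k => F (n+2) k) (n/2+1),
        Finset.sum_range_succ' (fun k => F (n+1) k) (n/2+1)]
    have hstep : ∀ k ∈ range (n/2+1),
        F (n+2) (k+1) = (1+q^(n+2)) * x * F (n+1) (k+1) + q^(n+1) * s * F n k := by
      intro k hk
      simp only [mem_range] at hk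
      rcases Nat.lt_or_ge (2*k) n with h | h
      · obtain ⟨a, rfl⟩ : ∃ a, n = 2*k+a+1 := ⟨n-(2*k+1), by omega⟩
        simpa [show 2*k+a+1+2 = 2*k+a+3 from rfl, show 2*k+a+1+1 = 2*k+a+2 from rfl]
          using F_step k a
      · obtain rfl : n = 2*k := by omega
        exact F_step_top k
    rw [Finset.sum_congr rfl hstep, F_zero_step, Finset.sum_add_distrib,
        ← Finset.mul_sum, ← Finset.mul_sum]
    ring


theorem chebU_explicit (n : ℕ) :
    chebU n = ∑ k ∈ range (n / 2 + 1),
      q ^ (k ^ 2) * gbinom (n - k) k * (∏ j ∈ Icc (k + 1) (n - k), (1 + q ^ j)) *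
        s ^ k * x ^ (n - 2 * k) := chebU_eq n

end
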